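/- Let K, N, L be natural numbers with N \le L, let H \in \mathbb{C}^{K \times N}, S \in \mathbb{C}^{K \times L}, and c > 0. Suppose H^H S = U \Sigma V^H, where U \in \mathbb{C}^{N \times N} and V \in \mathbb{C}^{L \times L} are unitary and \Sigma \in \mathbb{C}^{N \times L} is a rectangular diagonal matrix with nonnegative real diagonal entries. Set X_0 = \sqrt{c} \, U I_{N \times L} V^H, where I_{N \times L} is the rectangular identity matrix (ones on the main diagonal, zeros elsewhere). Then X_0 X_0^H = c I_N, and for every X \in \mathbb{C}^{N \times L} with X X^H = c I_N one has \|H X - S\|_F^2 \ge \|H X_0 - S\|_F^2; i.e., X_0 is a global minimizer of \|H X - S\|_F^2 over the set {X : X X^H = c I_N}. -/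

import Mathlib

open Matrix Finset

/-- Squared Frobenius norm of a complex matrix. -/
noncomputable def frobSq {m n : Type*} [Fintype m] [Fintype n]
    (A : Matrix m n ℂ) : ℝ :=
  ∑ i, ∑ j, ‖A i j‖ ^ 2

lemma trace_conjT {m n : Type*} [Fintype m] [Fintype n]
    (A B : Matrix m n ℂ) :
    trace (A * Bᴴ) = ∑ i, ∑ j, A i j * (starRingEnd ℂ) (B i j) := by
  simp [Matrix.trace, Matrix.diag, Matrix.mul_apply, Matrix.conjTranspose_apply]

lemma norm_sq_sub (z w : ℂ) :
    ‖z - w‖ ^ 2 = ‖z‖ ^ 2 + ‖w‖ ^ 2 - 2 * (z * (starRingEnd ℂ) w).re := by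
  rw [Complex.sq_norm, Complex.sq_norm, Complex.sq_norm]
  simp [Complex.normSq_apply, Complex.mul_re, Complex.sub_re, Complex.sub_im]
  ring

lemma frobSq_sub {m n : Type*} [Fintype m] [Fintype n]
    (A B : Matrix m n ℂ) :
    frobSq (A - B) = frobSq A + frobSq B - 2 * (trace (A * Bᴴ)).re := by
  simp only [frobSq, trace_conjT, Complex.re_sum, Matrix.sub_apply, norm_sq_sub,
    Finset.sum_sub_distrib, Finset.sum_add_distrib, Finset.mul_sum]

lemma frobSq_eq_trace {m n : Type*} [Fintype m] [Fintype n]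
    (A : Matrix m n ℂ) : frobSq A = (trace (A * Aᴴ)).re := by
  simp [frobSq, trace_conjT, Complex.re_sum, Complex.mul_conj,
    Complex.normSq_eq_norm_sq, ← Complex.ofReal_pow]

/-- **Statement 9.** Let `N ≤ L`, `H ∈ ℂ^{K×N}`, `S ∈ ℂ^{K×L}`, `c > 0`, and suppose
`Hᴴ S = U Sig Vᴴ` is an SVD (with `U`, `V` unitary and `Sig` rectangular diagonal with
nonnegative real diagonal entries).  Then `X₀ = √c • U I_{N×L} Vᴴ` satisfies
`X₀ X₀ᴴ = c I_N` and globally minimizes `‖H X - S‖_F²` over `{X : X Xᴴ = c I_N}`. -/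
theorem procrustes_svd_solution
    (K N L : ℕ) (hNL : N ≤ L)
    (H : Matrix (Fin K) (Fin N) ℂ) (S : Matrix (Fin K) (Fin L) ℂ)
    (c : ℝ) (hc : 0 < c)
    (U : Matrix (Fin N) (Fin N) ℂ) (V : Matrix (Fin L) (Fin L) ℂ)
    (hU1 : Uᴴ * U = 1) (hU2 : U * Uᴴ = 1)
    (hV1 : Vᴴ * V = 1) (hV2 : V * Vᴴ = 1)
    (Sig : Matrix (Fin N) (Fin L) ℂ)
    (hSigoff : ∀ (i : Fin N) (j : Fin L), (i : ℕ) ≠ (j : ℕ) → Sig i j = 0)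
    (hSigdiag : ∀ (i : Fin N) (j : Fin L), (i : ℕ) = (j : ℕ) →
      ∃ r : ℝ, 0 ≤ r ∧ Sig i j = (r : ℂ))
    (hSVD : Hᴴ * S = U * Sig * Vᴴ)
    (E : Matrix (Fin N) (Fin L) ℂ)
    (hE : E = Matrix.of fun (i : Fin N) (j : Fin L) =>
      if (i : ℕ) = (j : ℕ) then (1 : ℂ) else 0)
    (X0 : Matrix (Fin N) (Fin L) ℂ)
    (hX0 : X0 = (Real.sqrt c : ℂ) • (U * E * Vᴴ)) :
    X0 * X0ᴴ = (c : ℂ) • (1 : Matrix (Fin N) (Fin N) ℂ) ∧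
    ∀ X : Matrix (Fin N) (Fin L) ℂ,
      X * Xᴴ = (c : ℂ) • (1 : Matrix (Fin N) (Fin N) ℂ) →
      frobSq (H * X0 - S) ≤ frobSq (H * X - S) := by
  have hsc : ((Real.sqrt c : ℝ) : ℂ) * ((Real.sqrt c : ℝ) : ℂ) = (c : ℂ) := by
    rw [← Complex.ofReal_mul, Real.mul_self_sqrt hc.le]
  -- E * Eᴴ = 1
  have hEE : E * Eᴴ = 1 := by
    subst hE
    ext i k
    simp only [Matrix.mul_apply, Matrix.conjTranspose_apply, Matrix.of_apply,
      Matrix.one_apply]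
    rw [Finset.sum_eq_single (Fin.castLE hNL i)]
    · by_cases h : i = k
      · subst h; simp
      · have : (k : ℕ) ≠ (i : ℕ) := fun hh => h (Fin.ext hh.symm)
        simp [h, this]
    · intro b _ hb
      have : (i : ℕ) ≠ (b : ℕ) := fun hh => hb (Fin.ext hh.symm)
      simp [this]
    · simp
  -- X0 * X0ᴴ = c • 1
  have hX0c : X0 * X0ᴴ = (c : ℂ) • (1 : Matrix (Fin N) (Fin N) ℂ) := by
    rw [hX0, Matrix.conjTranspose_smul, Matrix.smul_mul, Matrix.mul_smul,
      smul_smul]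
    rw [Complex.star_def, Complex.conj_ofReal, hsc]
    congr 1
    rw [Matrix.conjTranspose_mul, Matrix.conjTranspose_mul,
      Matrix.conjTranspose_conjTranspose]
    calc U * E * Vᴴ * (V * (Eᴴ * Uᴴ))
        = U * (E * (Vᴴ * (V * (Eᴴ * Uᴴ)))) := by
          simp only [Matrix.mul_assoc]
      _ = U * (E * (Eᴴ * Uᴴ)) := by
          rw [← Matrix.mul_assoc Vᴴ V, hV1, Matrix.one_mul]
      _ = U * Uᴴ := by rw [← Matrix.mul_assoc E Eᴴ, hEE, Matrix.one_mul]
      _ = 1 := hU2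
  -- singular values
  have hcast : ∀ i : Fin N, (i : ℕ) = ((Fin.castLE hNL i : Fin L) : ℕ) := fun i => rfl
  set σ : Fin N → ℝ := fun i => (hSigdiag i (Fin.castLE hNL i) (hcast i)).choose with hσdef
  have hσ0 : ∀ i, 0 ≤ σ i := fun i => (hSigdiag i (Fin.castLE hNL i) (hcast i)).choose_spec.1
  have hσ : ∀ i, Sig i (Fin.castLE hNL i) = ((σ i : ℝ) : ℂ) :=
    fun i => (hSigdiag i (Fin.castLE hNL i) (hcast i)).choose_spec.2
  -- trace rewriting
  have htr : ∀ X : Matrix (Fin N) (Fin L) ℂ,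
      trace (H * X * Sᴴ) = trace (Sigᴴ * (Uᴴ * X * V)) := by
    intro X
    rw [trace_mul_comm, ← Matrix.mul_assoc,
      show Sᴴ * H = (Hᴴ * S)ᴴ by
        rw [Matrix.conjTranspose_mul, Matrix.conjTranspose_conjTranspose],
      hSVD, Matrix.conjTranspose_mul, Matrix.conjTranspose_mul,
      Matrix.conjTranspose_conjTranspose]
    rw [Matrix.mul_assoc V, trace_mul_comm V]
    simp only [Matrix.mul_assoc]
  have htr2 : ∀ M : Matrix (Fin N) (Fin L) ℂ,
      trace (Sigᴴ * M) = ∑ i : Fin N, ((σ i : ℝ) : ℂ) * M i (Fin.castLE hNL i) := by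
    intro M
    rw [trace_mul_comm, trace_conjT]
    apply Finset.sum_congr rfl
    intro i _
    rw [Finset.sum_eq_single (Fin.castLE hNL i)]
    · rw [hσ i, Complex.conj_ofReal, mul_comm]
    · intro b _ hb
      rw [hSigoff i b (fun hh => hb (Fin.ext hh.symm))]
      simp
    · simp
  -- constraint transfers to W = Uᴴ X V
  have hW : ∀ X : Matrix (Fin N) (Fin L) ℂ,
      X * Xᴴ = (c : ℂ) • (1 : Matrix (Fin N) (Fin N) ℂ) →
      (Uᴴ * X * V) * (Uᴴ * X * V)ᴴ = (c : ℂ) • (1 : Matrix (Fin N) (Fin N) ℂ) := by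
    intro X hXc
    rw [Matrix.conjTranspose_mul, Matrix.conjTranspose_mul,
      Matrix.conjTranspose_conjTranspose]
    calc Uᴴ * X * V * (Vᴴ * (Xᴴ * U))
        = Uᴴ * (X * (V * (Vᴴ * (Xᴴ * U)))) := by
          simp only [Matrix.mul_assoc]
      _ = Uᴴ * (X * (Xᴴ * U)) := by
          rw [← Matrix.mul_assoc V Vᴴ, hV2, Matrix.one_mul]
      _ = Uᴴ * (((c : ℂ) • 1) * U) := by rw [← Matrix.mul_assoc X Xᴴ, hXc]
      _ = (c : ℂ) • (Uᴴ * U) := by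
          rw [Matrix.smul_mul, Matrix.one_mul, Matrix.mul_smul]
      _ = (c : ℂ) • 1 := by rw [hU1]
  -- entry bound
  have hbound : ∀ X : Matrix (Fin N) (Fin L) ℂ,
      X * Xᴴ = (c : ℂ) • (1 : Matrix (Fin N) (Fin N) ℂ) →
      ∀ i : Fin N, ‖(Uᴴ * X * V) i (Fin.castLE hNL i)‖ ≤ Real.sqrt c := by
    intro X hXc i
    set M := Uᴴ * X * V with hM
    have h1 : ∑ j, Complex.normSq (M i j) = c := by
      have h2 := congrFun (congrFun (hW X hXc) i) i
      simp only [Matrix.mul_apply, Matrix.conjTranspose_apply,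
        Matrix.smul_apply, Matrix.one_apply_eq, smul_eq_mul, mul_one] at h2
      have h3 : ∑ j, ((Complex.normSq (M i j) : ℝ) : ℂ) = (c : ℂ) := by
        rw [← h2]
        exact Finset.sum_congr rfl fun j _ => (Complex.mul_conj (M i j)).symm
      rw [← Complex.ofReal_sum] at h3
      exact_mod_cast h3
    have h4 : Complex.normSq (M i (Fin.castLE hNL i)) ≤ c := by
      rw [← h1]
      exact Finset.single_le_sum (fun j _ => Complex.normSq_nonneg _)
        (Finset.mem_univ _)
    have h5 : ‖M i (Fin.castLE hNL i)‖ = Real.sqrt (Complex.normSq (M i (Fin.castLE hNL i))) := by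
      rw [Complex.norm_def]
    rw [h5]
    exact Real.sqrt_le_sqrt h4
  -- maximal value bound
  have hmax : ∀ X : Matrix (Fin N) (Fin L) ℂ,
      X * Xᴴ = (c : ℂ) • (1 : Matrix (Fin N) (Fin N) ℂ) →
      (trace (H * X * Sᴴ)).re ≤ ∑ i, σ i * Real.sqrt c := by
    intro X hXc
    rw [htr X, htr2, Complex.re_sum]
    apply Finset.sum_le_sum
    intro i _
    have h1 : (((σ i : ℝ) : ℂ) * (Uᴴ * X * V) i (Fin.castLE hNL i)).re
        = σ i * ((Uᴴ * X * V) i (Fin.castLE hNL i)).re := by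
      simp [Complex.mul_re]
    rw [h1]
    apply mul_le_mul_of_nonneg_left _ (hσ0 i)
    exact le_trans (Complex.re_le_norm _) (hbound X hXc i)
  -- value at X0
  have hW0 : Uᴴ * X0 * V = ((Real.sqrt c : ℝ) : ℂ) • E := by
    rw [hX0, Matrix.mul_smul, Matrix.smul_mul]
    congr 1
    calc Uᴴ * (U * E * Vᴴ) * V = (Uᴴ * U) * E * (Vᴴ * V) := by
          simp only [Matrix.mul_assoc]
      _ = E := by rw [hU1, hV1, Matrix.one_mul, Matrix.mul_one]
  have hX0tr : (trace (H * X0 * Sᴴ)).re = ∑ i, σ i * Real.sqrt c := by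
    rw [htr X0, htr2, hW0, Complex.re_sum]
    apply Finset.sum_congr rfl
    intro i _
    have hE1 : E i (Fin.castLE hNL i) = 1 := by
      rw [hE]; simp
    simp [Matrix.smul_apply, hE1, Complex.mul_re, mul_comm]
  -- constant term
  have hconst : ∀ Y : Matrix (Fin N) (Fin L) ℂ,
      Y * Yᴴ = (c : ℂ) • (1 : Matrix (Fin N) (Fin N) ℂ) →
      frobSq (H * Y) = (trace ((c : ℂ) • (H * Hᴴ))).re := by
    intro Y hYc
    have hmat : H * Y * (H * Y)ᴴ = (c : ℂ) • (H * Hᴴ) := by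
      rw [Matrix.conjTranspose_mul]
      calc H * Y * (Yᴴ * Hᴴ) = H * ((Y * Yᴴ) * Hᴴ) := by
            simp only [Matrix.mul_assoc]
        _ = H * (((c : ℂ) • (1 : Matrix (Fin N) (Fin N) ℂ)) * Hᴴ) := by rw [hYc]
        _ = (c : ℂ) • (H * Hᴴ) := by
            rw [Matrix.smul_mul, Matrix.one_mul, Matrix.mul_smul]
    rw [frobSq_eq_trace, hmat]
  refine ⟨hX0c, fun X hXc => ?_⟩
  rw [frobSq_sub, frobSq_sub, hconst X hXc, hconst X0 hX0c]
  have h1 := hmax X hXc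
  have h2 := hX0tr
  linarith
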